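/- With x_{0,l} as above (x_{0,0}=0), and assuming β₁ + 1 > 2α₂, the sum B₀ := ∑_{l=0}^∞ x_{0,l}(l + β₂/α₂)(l + 1 + β₂/α₂) converges and equals (r/(β₁+1−2α₂)) · Γ(3+β₂/α₂)/Γ(1+β₂/α₂). -/

import Mathlib

open Real Filter Topology

lemma gamma_gautschi (s g : ℝ) (hs : 0 < s) (hg0 : 0 < g) (hg1 : g ≤ 1) :
    Real.Gamma (s + 1) ≤ Real.Gamma (s + g) * (s + g) ^ (1 - g) := by
  have hsg : (0:ℝ) < s + g := by linarith
  have h := Real.convexOn_log_Gamma.2 (show s + g ∈ Set.Ioi (0:ℝ) from hsg)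
    (show s + g + 1 ∈ Set.Ioi (0:ℝ) by simp only [Set.mem_Ioi]; linarith)
    hg0.le (by linarith : (0:ℝ) ≤ 1 - g) (by ring)
  have harg : g • (s + g) + (1 - g) • (s + g + 1) = s + 1 := by
    simp only [smul_eq_mul]; ring
  rw [harg] at h
  simp only [Function.comp_apply, smul_eq_mul] at h
  have hΓ1 : Real.Gamma (s + g + 1) = (s + g) * Real.Gamma (s + g) :=
    Real.Gamma_add_one hsg.ne'
  have p1 : 0 < Real.Gamma (s + g) := Real.Gamma_pos_of_pos hsg
  have p2 : 0 < Real.Gamma (s + 1) := Real.Gamma_pos_of_pos (by linarith)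
  have h2 : Real.log (Real.Gamma (s + 1)) ≤
      Real.log (Real.Gamma (s + g)) + (1 - g) * Real.log (s + g) := by
    rw [hΓ1, Real.log_mul hsg.ne' p1.ne'] at h
    linarith
  calc Real.Gamma (s + 1) = Real.exp (Real.log (Real.Gamma (s + 1))) := (Real.exp_log p2).symm
    _ ≤ Real.exp (Real.log (Real.Gamma (s + g)) + (1 - g) * Real.log (s + g)) :=
        Real.exp_le_exp.2 h2
    _ = Real.Gamma (s + g) * (s + g) ^ (1 - g) := by
        rw [Real.exp_add, Real.exp_log p1, Real.rpow_def_of_pos hsg, mul_comm (1-g)]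

lemma gamma_ratio_tendsto_zero (p g : ℝ) (hp : 2 ≤ p) (hg : 0 < g) :
    Tendsto (fun n : ℕ => Real.Gamma (n + p) / Real.Gamma (n + p + g)) atTop (𝓝 0) := by
  set c : ℝ := min g 1 with hc_def
  have hc0 : 0 < c := lt_min hg one_pos
  have hc1 : c ≤ 1 := min_le_right _ _
  have hcg : c ≤ g := min_le_left _ _
  have key : ∀ n : ℕ, Real.Gamma (n + p) / Real.Gamma (n + p + g) ≤
      2 ^ (1 - c) * ((n : ℝ) + p) ^ (-c) := by
    intro n
    set s : ℝ := (n : ℝ) + p with hs_def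
    have hs : 2 ≤ s := by
      have : (0:ℝ) ≤ n := Nat.cast_nonneg n
      simp only [hs_def]; linarith
    have hs0 : 0 < s := by linarith
    have pG : ∀ y : ℝ, 0 < y → 0 < Real.Gamma y := fun y hy => Real.Gamma_pos_of_pos hy
    -- Gamma (s + c) ≤ Gamma (s + g)
    have hmono : Real.Gamma (s + c) ≤ Real.Gamma (s + g) := by
      rcases eq_or_lt_of_le hcg with h | h
      · rw [h]
      · apply Real.Gamma_strictMonoOn_Ici.monotoneOn
        · simp only [Set.mem_Ici]; linarith
        · simp only [Set.mem_Ici]; linarith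
        · linarith
    have step1 : Real.Gamma s / Real.Gamma (s + g) ≤ Real.Gamma s / Real.Gamma (s + c) :=
      div_le_div_of_nonneg_left (pG s hs0).le (pG _ (by linarith)) hmono
    have step2 : Real.Gamma s / Real.Gamma (s + c) ≤ (s + c) ^ (1 - c) / s := by
      rw [div_le_div_iff₀ (pG _ (by linarith)) hs0]
      have hG1 : Real.Gamma (s + 1) = s * Real.Gamma s := Real.Gamma_add_one hs0.ne'
      have := gamma_gautschi s c hs0 hc0 hc1
      rw [hG1] at this
      nlinarith [this]
    have step3 : (s + c) ^ (1 - c) / s ≤ 2 ^ (1 - c) * s ^ (-c) := by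
      have h1 : (s + c) ^ (1 - c) ≤ (2 * s) ^ (1 - c) := by
        apply Real.rpow_le_rpow (by linarith) (by linarith) (by linarith)
      have h2 : ((2:ℝ) * s) ^ (1 - c) = 2 ^ (1 - c) * s ^ (1 - c) :=
        Real.mul_rpow (by norm_num) hs0.le
      have h3 : s ^ (1 - c) / s = s ^ (-c) := by
        rw [div_eq_mul_inv, ← Real.rpow_neg_one s, ← Real.rpow_add hs0]
        ring_nf
      calc (s + c) ^ (1 - c) / s ≤ (2 * s) ^ (1 - c) / s := by
            gcongr
        _ = 2 ^ (1 - c) * (s ^ (1 - c) / s) := by rw [h2]; ring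
        _ = 2 ^ (1 - c) * s ^ (-c) := by rw [h3]
    calc Real.Gamma s / Real.Gamma (s + g) ≤ Real.Gamma s / Real.Gamma (s + c) := step1
      _ ≤ (s + c) ^ (1 - c) / s := step2
      _ ≤ 2 ^ (1 - c) * s ^ (-c) := step3
  have hlow : ∀ n : ℕ, (0:ℝ) ≤ Real.Gamma (n + p) / Real.Gamma (n + p + g) := by
    intro n
    have hn0 : (0:ℝ) < (n:ℝ) + p := by positivity
    exact div_nonneg (Real.Gamma_pos_of_pos hn0).le
      (Real.Gamma_pos_of_pos (by linarith)).le
  have hrpow : Tendsto (fun n : ℕ => 2 ^ (1 - c) * ((n : ℝ) + p) ^ (-c)) atTop (𝓝 0) := by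
    rw [show (0:ℝ) = 2 ^ (1 - c) * 0 by ring]
    apply Tendsto.const_mul
    apply (tendsto_rpow_neg_atTop hc0).comp
    exact tendsto_atTop_add_const_right atTop p tendsto_natCast_atTop_atTop
  exact tendsto_of_tendsto_of_tendsto_of_le_of_le tendsto_const_nhds hrpow hlow key

theorem second_moment_B0 (α₂ β₁ β₂ r : ℝ) (hα₂ : 0 < α₂) (hβ₁ : 0 < β₁) (hβ₂ : 0 < β₂)
    (hr : 0 < r) (hcond : β₁ + 1 > 2 * α₂) (x : ℕ → ℝ) (hx0 : x 0 = 0)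
    (hx : ∀ l : ℕ, 1 ≤ l →
      x l = (r / α₂) *
        (Real.Gamma (1 + (β₁ + β₂ + 1) / α₂) / Real.Gamma (1 + β₂ / α₂)) *
        (Real.Gamma ((l : ℝ) + β₂ / α₂) /
          Real.Gamma ((l : ℝ) + (α₂ + (β₁ + β₂) + 1) / α₂))) :
    HasSum (fun l : ℕ => x l * ((l : ℝ) + β₂ / α₂) * ((l : ℝ) + 1 + β₂ / α₂))
      ((r / (β₁ + 1 - 2 * α₂)) *
        (Real.Gamma (3 + β₂ / α₂) / Real.Gamma (1 + β₂ / α₂))) := by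
  have hα : α₂ ≠ 0 := hα₂.ne'
  have pG : ∀ y : ℝ, 0 < y → 0 < Real.Gamma y := fun y hy => Real.Gamma_pos_of_pos hy
  set a := β₂ / α₂ with ha_def
  have ha : 0 < a := div_pos hβ₂ hα₂
  set δ := (β₁ + 1) / α₂ with hδ_def
  have hδ2 : 2 < δ := by rw [hδ_def, lt_div_iff₀ hα₂]; linarith
  have hD : 0 < δ - 2 := by linarith
  have haux1 : (β₁ + β₂ + 1) / α₂ = a + δ := by rw [ha_def, hδ_def]; field_simp; ring
  have haux2 : (α₂ + (β₁ + β₂) + 1) / α₂ = 1 + (a + δ) := by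
    rw [ha_def, hδ_def]; field_simp; ring
  simp only [haux1, haux2] at hx
  set C := r / α₂ * (Real.Gamma (1 + (a + δ)) / Real.Gamma (1 + a)) with hC_def
  have hC0 : 0 ≤ C := by
    apply mul_nonneg (div_nonneg hr.le hα₂.le)
    exact div_nonneg (pG _ (by linarith)).le (pG _ (by linarith)).le
  set t : ℕ → ℝ :=
    fun n => Real.Gamma ((n : ℝ) + (2 + a)) / Real.Gamma ((n : ℝ) + (2 + a) + (δ - 2))
    with ht_def
  -- pointwise telescoping identity
  have hterm : ∀ i : ℕ, x (i + 1) * (((i + 1 : ℕ) : ℝ) + a) * (((i + 1 : ℕ) : ℝ) + 1 + a)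
      = C / (δ - 2) * (t (i + 1) - t (i + 1 + 1)) := by
    intro i
    rw [hx (i + 1) (Nat.le_add_left 1 i)]
    simp only [ht_def]
    push_cast
    set A := (i : ℝ) + 1 + a with hA_def
    have hi0 : (0:ℝ) ≤ (i : ℝ) := Nat.cast_nonneg i
    have hApos : 0 < A := by rw [hA_def]; linarith
    have hADpos : 0 < A + δ := by linarith
    have gA := pG A hApos
    have gAD := pG (A + δ) hADpos
    have e2 : Real.Gamma (A + 2) = (A + 1) * (A * Real.Gamma A) := by
      rw [show A + 2 = A + 1 + 1 by ring, Real.Gamma_add_one (by linarith),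
        Real.Gamma_add_one hApos.ne']
    have e3 : Real.Gamma (A + 3) = (A + 2) * ((A + 1) * (A * Real.Gamma A)) := by
      rw [show A + 3 = A + 2 + 1 by ring, Real.Gamma_add_one (by linarith), e2]
    have e5 : Real.Gamma (A + δ + 1) = (A + δ) * Real.Gamma (A + δ) :=
      Real.Gamma_add_one hADpos.ne'
    rw [show (i : ℝ) + 1 + (2 + a) + (δ - 2) = A + δ by rw [hA_def]; ring,
      show (i : ℝ) + 1 + 1 + (2 + a) + (δ - 2) = A + δ + 1 by rw [hA_def]; ring,
      show (i : ℝ) + 1 + (1 + (a + δ)) = A + δ + 1 by rw [hA_def]; ring,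
      show (i : ℝ) + 1 + (2 + a) = A + 2 by rw [hA_def]; ring,
      show (i : ℝ) + 1 + 1 + (2 + a) = A + 3 by rw [hA_def]; ring,
      show (i : ℝ) + 1 + 1 + a = A + 1 by rw [hA_def]; ring,
      e2, e3, e5]
    field_simp
    ring
  -- partial sums
  have hsum : ∀ n : ℕ, ∑ i ∈ Finset.range (n + 1), x i * ((i : ℝ) + a) * ((i : ℝ) + 1 + a)
      = C / (δ - 2) * (t 1 - t (n + 1)) := by
    intro n
    rw [Finset.sum_range_succ']
    simp only [hx0, Nat.cast_zero, zero_mul, add_zero]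
    calc (∑ i ∈ Finset.range n,
          x (i + 1) * (((i + 1 : ℕ) : ℝ) + a) * (((i + 1 : ℕ) : ℝ) + 1 + a))
        = ∑ i ∈ Finset.range n, C / (δ - 2) * (t (i + 1) - t (i + 1 + 1)) :=
          Finset.sum_congr rfl fun i _ => hterm i
      _ = C / (δ - 2) * ∑ i ∈ Finset.range n, (t (i + 1) - t (i + 1 + 1)) := by
          rw [Finset.mul_sum]
      _ = C / (δ - 2) * (t 1 - t (n + 1)) := by
          rw [Finset.sum_range_sub' (fun k => t (k + 1)) n]
  -- limit of the tail
  have ht0 : Tendsto t atTop (𝓝 0) := by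
    have h := gamma_ratio_tendsto_zero (2 + a) (δ - 2) (by linarith) hD
    exact h
  have hT : Tendsto (fun n : ℕ => ∑ i ∈ Finset.range n,
      x i * ((i : ℝ) + a) * ((i : ℝ) + 1 + a)) atTop (𝓝 (C / (δ - 2) * t 1)) := by
    rw [← tendsto_add_atTop_iff_nat 1]
    simp only [hsum]
    have h1 : Tendsto (fun n : ℕ => t (n + 1)) atTop (𝓝 0) :=
      ht0.comp (tendsto_add_atTop_nat 1)
    have h2 := Tendsto.sub
      (tendsto_const_nhds : Tendsto (fun _ : ℕ => t 1) atTop (𝓝 (t 1))) h1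
    rw [sub_zero] at h2
    exact h2.const_mul (C / (δ - 2))
  -- identify the value
  have hval : C / (δ - 2) * t 1 = r / (β₁ + 1 - 2 * α₂) *
      (Real.Gamma (3 + a) / Real.Gamma (1 + a)) := by
    have hβne : (0:ℝ) < β₁ + 1 - 2 * α₂ := by linarith
    have g1 := pG (1 + a) (by linarith)
    have g2 := pG (1 + (a + δ)) (by linarith)
    simp only [ht_def]
    rw [show ((1 : ℕ) : ℝ) + (2 + a) + (δ - 2) = 1 + (a + δ) by push_cast; ring,
      show ((1 : ℕ) : ℝ) + (2 + a) = 3 + a by push_cast; ring,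
      hC_def]
    have hδ2' : δ - 2 = (β₁ + 1 - 2 * α₂) / α₂ := by rw [hδ_def]; field_simp
    rw [hδ2']
    have gen : ∀ G H K : ℝ, G ≠ 0 → H ≠ 0 →
        r / α₂ * (G / H) / ((β₁ + 1 - 2 * α₂) / α₂) * (K / G)
          = r / (β₁ + 1 - 2 * α₂) * (K / H) := by
      intro G H K hG hH
      field_simp [hβne.ne']
    exact gen _ _ _ g2.ne' g1.ne'
  -- nonnegativity
  have hnn : ∀ i : ℕ, 0 ≤ x i * ((i : ℝ) + a) * ((i : ℝ) + 1 + a) := by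
    intro i
    match i with
    | 0 => simp [hx0]
    | (j + 1) =>
      rw [hx (j + 1) (Nat.le_add_left 1 j)]
      have hj0 : (0:ℝ) ≤ ((j + 1 : ℕ) : ℝ) := Nat.cast_nonneg _
      have p1 : 0 < ((j + 1 : ℕ) : ℝ) + a := by linarith
      apply mul_nonneg
      apply mul_nonneg
      · exact mul_nonneg hC0 (div_nonneg (pG _ p1).le (pG _ (by linarith)).le)
      · linarith
      · linarith
  rw [hasSum_iff_tendsto_nat_of_nonneg hnn]
  rw [← hval]
  exact hT
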